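/- Let E₁, E₂ ∈ L(H) be (not necessarily orthogonal) projections on a Hilbert space H, and let P_{R(E₁)}, P_{R(E₂)} be the orthogonal projections onto their ranges. Then ‖P_{R(E₁)} − P_{R(E₂)}‖ ≤ ‖E₁ − E₂‖. -/

import Mathlib

open ContinuousLinearMap

variable {H : Type*} [NormedAddCommGroup H] [InnerProductSpace ℂ H] [CompleteSpace H]

private lemma sa_idem_contraction (P : H →L[ℂ] H) (hP : P ∘L P = P)
    (hsa : IsSelfAdjoint P) (x : H) : ‖P x‖ ≤ ‖x‖ := by
  have hPP : P (P x) = P x := by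
    have := ContinuousLinearMap.ext_iff.mp hP x
    simpa using this
  have key : (inner ℂ (P x) x : ℂ) = inner ℂ (P x) (P x) := by
    have := ContinuousLinearMap.adjoint_inner_left P x (P x)
    rw [hsa.adjoint_eq, hPP] at this
    exact this
  have h2 : ‖P x‖ ^ 2 = RCLike.re (inner ℂ (P x) x : ℂ) := by
    rw [key, @inner_self_eq_norm_sq ℂ]
  have h3 : RCLike.re (inner ℂ (P x) x : ℂ) ≤ ‖P x‖ * ‖x‖ := by
    calc RCLike.re (inner ℂ (P x) x : ℂ) ≤ ‖(inner ℂ (P x) x : ℂ)‖ := RCLike.re_le_norm _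
      _ ≤ ‖P x‖ * ‖x‖ := norm_inner_le_norm _ _
  nlinarith [norm_nonneg (P x), norm_nonneg x]

private lemma sa_idem_inner_zero (P : H →L[ℂ] H) (hP : P ∘L P = P)
    (hsa : IsSelfAdjoint P) (a b : H) : (inner ℂ (P a) (b - P b) : ℂ) = 0 := by
  have hPP : P (P b) = P b := by
    have := ContinuousLinearMap.ext_iff.mp hP b
    simpa using this
  have h := ContinuousLinearMap.adjoint_inner_left P (b - P b) a
  rw [hsa.adjoint_eq] at h
  rw [h, map_sub, hPP, sub_self, inner_zero_right]

set_option maxHeartbeats 1000000 in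
/-- If `E₁, E₂` are (not necessarily orthogonal) bounded projections and `P₁, P₂` the orthogonal
projections onto their ranges, then `‖P₁ − P₂‖ ≤ ‖E₁ − E₂‖`. -/
theorem stmt8 (E₁ E₂ P₁ P₂ : H →L[ℂ] H)
    (hE₁ : E₁ ∘L E₁ = E₁) (hE₂ : E₂ ∘L E₂ = E₂)
    (hP₁ : P₁ ∘L P₁ = P₁) (hP₁sa : IsSelfAdjoint P₁)
    (hP₂ : P₂ ∘L P₂ = P₂) (hP₂sa : IsSelfAdjoint P₂)
    (hr₁ : LinearMap.range (P₁ : H →ₗ[ℂ] H) = LinearMap.range (E₁ : H →ₗ[ℂ] H))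
    (hr₂ : LinearMap.range (P₂ : H →ₗ[ℂ] H) = LinearMap.range (E₂ : H →ₗ[ℂ] H)) :
    ‖P₁ - P₂‖ ≤ ‖E₁ - E₂‖ := by
  have hC0 : (0:ℝ) ≤ ‖E₁ - E₂‖ := norm_nonneg _
  -- identity on ranges
  have hE₁fix : ∀ y ∈ LinearMap.range (E₁ : H →ₗ[ℂ] H), E₁ y = y := by
    rintro _ ⟨w, rfl⟩
    have := ContinuousLinearMap.ext_iff.mp hE₁ w
    simpa using this
  have hE₂fix : ∀ y ∈ LinearMap.range (E₂ : H →ₗ[ℂ] H), E₂ y = y := by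
    rintro _ ⟨w, rfl⟩
    have := ContinuousLinearMap.ext_iff.mp hE₂ w
    simpa using this
  have hP₁fix : ∀ y ∈ LinearMap.range (P₁ : H →ₗ[ℂ] H), P₁ y = y := by
    rintro _ ⟨w, rfl⟩
    have := ContinuousLinearMap.ext_iff.mp hP₁ w
    simpa using this
  have hP₂fix : ∀ y ∈ LinearMap.range (P₂ : H →ₗ[ℂ] H), P₂ y = y := by
    rintro _ ⟨w, rfl⟩
    have := ContinuousLinearMap.ext_iff.mp hP₂ w
    simpa using this
  -- operator relations
  have hE₁P₁ : ∀ w, E₁ (P₁ w) = P₁ w := fun w =>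
    hE₁fix _ (hr₁ ▸ LinearMap.mem_range_self P₁.toLinearMap w)
  have hP₁E₁ : ∀ w, P₁ (E₁ w) = E₁ w := fun w =>
    hP₁fix _ (hr₁.symm ▸ LinearMap.mem_range_self E₁.toLinearMap w)
  have hE₂P₂ : ∀ w, E₂ (P₂ w) = P₂ w := fun w =>
    hE₂fix _ (hr₂ ▸ LinearMap.mem_range_self P₂.toLinearMap w)
  have hP₂E₂ : ∀ w, P₂ (E₂ w) = E₂ w := fun w =>
    hP₂fix _ (hr₂.symm ▸ LinearMap.mem_range_self E₂.toLinearMap w)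
  -- adjoint relations
  have hadj₁ : ∀ w, P₁ (ContinuousLinearMap.adjoint E₁ w) = P₁ w := by
    intro w
    have h : ContinuousLinearMap.adjoint (E₁ ∘L P₁) = P₁ ∘L ContinuousLinearMap.adjoint E₁ := by
      rw [ContinuousLinearMap.adjoint_comp, hP₁sa.adjoint_eq]
    have hEP : E₁ ∘L P₁ = P₁ := ContinuousLinearMap.ext hE₁P₁
    rw [hEP, hP₁sa.adjoint_eq] at h
    simpa using (ContinuousLinearMap.ext_iff.mp h w).symm
  have hadj₂ : ∀ w, ContinuousLinearMap.adjoint E₂ (P₂ w) = ContinuousLinearMap.adjoint E₂ w := by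
    intro w
    have h : ContinuousLinearMap.adjoint (P₂ ∘L E₂) = ContinuousLinearMap.adjoint E₂ ∘L P₂ := by
      rw [ContinuousLinearMap.adjoint_comp, hP₂sa.adjoint_eq]
    have hPE : P₂ ∘L E₂ = E₂ := ContinuousLinearMap.ext hP₂E₂
    rw [hPE] at h
    simpa using (ContinuousLinearMap.ext_iff.mp h w).symm
  -- pointwise bound
  refine ContinuousLinearMap.opNorm_le_bound _ hC0 fun x => ?_
  obtain ⟨z, hz⟩ : ∃ z, P₂ x = z := ⟨_, rfl⟩
  obtain ⟨y, hy⟩ : ∃ y, x - z = y := ⟨_, rfl⟩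
  have hx : x = z + y := by rw [← hy]; abel
  -- E₂† y = 0
  have hE₂y : ContinuousLinearMap.adjoint E₂ y = 0 := by
    rw [← hy, map_sub, ← hz, hadj₂, sub_self]
  -- bound for u := P₁ y
  have hu : P₁ y = P₁ (ContinuousLinearMap.adjoint (E₁ - E₂) y) := by
    have hd : ContinuousLinearMap.adjoint (E₁ - E₂) y
        = ContinuousLinearMap.adjoint E₁ y - ContinuousLinearMap.adjoint E₂ y := by
      rw [map_sub]; rfl
    rw [hd, hE₂y, sub_zero, hadj₁]
  have hubound : ‖P₁ y‖ ≤ ‖E₁ - E₂‖ * ‖y‖ := by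
    rw [hu]
    calc ‖P₁ (ContinuousLinearMap.adjoint (E₁ - E₂) y)‖
        ≤ ‖ContinuousLinearMap.adjoint (E₁ - E₂) y‖ := sa_idem_contraction P₁ hP₁ hP₁sa _
      _ ≤ ‖ContinuousLinearMap.adjoint (E₁ - E₂)‖ * ‖y‖ := ContinuousLinearMap.le_opNorm _ _
      _ = ‖E₁ - E₂‖ * ‖y‖ := by
          rw [LinearIsometryEquiv.norm_map (ContinuousLinearMap.adjoint (𝕜 := ℂ))]
  -- bound for v := z - P₁ z
  have hE₂z : E₂ z = z := by rw [← hz]; exact hE₂P₂ x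
  have hv : z - P₁ z = (E₂ - E₁) z - P₁ ((E₂ - E₁) z) := by
    have hP₁z : P₁ z = P₁ z := rfl
    have h1 : (E₂ - E₁) z = z - E₁ z := by
      rw [ContinuousLinearMap.sub_apply, hE₂z]
    rw [h1, map_sub, hP₁E₁]
    abel
  have hQ : ((1 : H →L[ℂ] H) - P₁) ∘L ((1 : H →L[ℂ] H) - P₁) = (1 : H →L[ℂ] H) - P₁ := by
    simp only [ContinuousLinearMap.comp_sub, ContinuousLinearMap.sub_comp,
      ContinuousLinearMap.comp_id, ContinuousLinearMap.id_comp, hP₁,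
      ContinuousLinearMap.one_def]
    abel
  have hQsa : IsSelfAdjoint ((1 : H →L[ℂ] H) - P₁) := ((IsSelfAdjoint.one (H →L[ℂ] H)).sub hP₁sa)
  have hvbound : ‖z - P₁ z‖ ≤ ‖E₁ - E₂‖ * ‖z‖ := by
    rw [hv]
    have h1 : ‖(E₂ - E₁) z - P₁ ((E₂ - E₁) z)‖ ≤ ‖(E₂ - E₁) z‖ := by
      have := sa_idem_contraction _ hQ hQsa ((E₂ - E₁) z)
      simpa using this
    calc ‖(E₂ - E₁) z - P₁ ((E₂ - E₁) z)‖ ≤ ‖(E₂ - E₁) z‖ := h1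
      _ ≤ ‖E₂ - E₁‖ * ‖z‖ := ContinuousLinearMap.le_opNorm _ _
      _ = ‖E₁ - E₂‖ * ‖z‖ := by rw [norm_sub_rev]
  -- split and Pythagoras
  have hsplit : (P₁ - P₂) x = P₁ y + -(z - P₁ z) := by
    rw [ContinuousLinearMap.sub_apply, hz, hx, map_add]
    abel
  have hinner : (inner ℂ (P₁ y) (-(z - P₁ z)) : ℂ) = 0 := by
    rw [inner_neg_right, sa_idem_inner_zero P₁ hP₁ hP₁sa y z, neg_zero]
  have hpyth : ‖(P₁ - P₂) x‖ * ‖(P₁ - P₂) x‖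
      = ‖P₁ y‖ * ‖P₁ y‖ + ‖z - P₁ z‖ * ‖z - P₁ z‖ := by
    rw [hsplit, norm_add_sq_eq_norm_sq_add_norm_sq_of_inner_eq_zero _ _ hinner, norm_neg]
  have hinner2 : (inner ℂ z y : ℂ) = 0 := by
    have := sa_idem_inner_zero P₂ hP₂ hP₂sa x x
    rwa [hz, hy] at this
  have hxsq : ‖x‖ * ‖x‖ = ‖z‖ * ‖z‖ + ‖y‖ * ‖y‖ := by
    rw [hx, norm_add_sq_eq_norm_sq_add_norm_sq_of_inner_eq_zero _ _ hinner2]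
  have hy0 : 0 ≤ ‖y‖ := norm_nonneg _
  have hz0 : 0 ≤ ‖z‖ := norm_nonneg _
  have hu0 : 0 ≤ ‖P₁ y‖ := norm_nonneg _
  have hv0 : 0 ≤ ‖z - P₁ z‖ := norm_nonneg _
  have hw0 : 0 ≤ ‖(P₁ - P₂) x‖ := norm_nonneg _
  have hx0 : 0 ≤ ‖x‖ := norm_nonneg _
  have h1 : ‖(P₁ - P₂) x‖ * ‖(P₁ - P₂) x‖ ≤ (‖E₁ - E₂‖ * ‖x‖) * (‖E₁ - E₂‖ * ‖x‖) := by
    have hu2 : ‖P₁ y‖ * ‖P₁ y‖ ≤ (‖E₁ - E₂‖ * ‖y‖) * (‖E₁ - E₂‖ * ‖y‖) :=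
      mul_self_le_mul_self hu0 hubound
    have hv2 : ‖z - P₁ z‖ * ‖z - P₁ z‖ ≤ (‖E₁ - E₂‖ * ‖z‖) * (‖E₁ - E₂‖ * ‖z‖) :=
      mul_self_le_mul_self hv0 hvbound
    nlinarith [mul_nonneg hC0 hC0]
  nlinarith [h1, mul_nonneg hC0 hx0]
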